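/- Let x_1, …, x_n ∈ ℝ^d be distinct and z_1, …, z_n ∈ ℝ^{d_z} be distinct. Let G : ℝ^K × ℝ^{d_z} → ℝ^d be continuous, f : ℝ^J × ℝ^d → ℝ be arbitrary, and 𝒲 ⊆ ℝ^K. Assume: (D-representation) for any distinct v_1, …, v_{2n} ∈ ℝ^d and any b_1, …, b_{2n} ∈ ℝ there exists θ ∈ ℝ^J with f(θ, v_i) = b_i for all i; (G-representation) for any y_1, …, y_n ∈ ℝ^d there exists w ∈ 𝒲 with G(w, z_i) = y_i for all i; (path-keeping) for any continuous path Y(t), t ∈ [0,1], in (ℝ^d)^n and any w₀ ∈ 𝒲 with G(w₀, z_i) = Y_i(0) for all i, there is a continuous path w(t), t ∈ [0,1], with w(0) = w₀ and G(w(t), z_i) = Y_i(t) for all i and t. Assume h : ℝ → ℝ is concave with sup_{t∈ℝ} h(t) = 0 and h(0) < 0. Define φ_R(w) = sup_{θ∈ℝ^J} (1/n) Σ_{i=1}^n h(f(θ, x_i) − f(θ, G(w, z_i))). Then every w ∈ 𝒲 is global-min-reachable for φ_R. -/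

import Mathlib

open scoped BigOperators

namespace Stmt16

variable {n : ℕ}

/-- one step of a partial map on `Fin n`. -/
def stepO (π : Fin n → Option (Fin n)) : Option (Fin n) → Option (Fin n) := fun o => o.bind π

lemma stepO_none (π : Fin n → Option (Fin n)) : stepO π none = none := rfl
lemma stepO_some (π : Fin n → Option (Fin n)) (k : Fin n) : stepO π (some k) = π k := rfl

/-- `k` is a periodic point of the partial map `π`. -/
def isPer (π : Fin n → Option (Fin n)) (k : Fin n) : Prop :=
  ∃ m, 0 < m ∧ (stepO π)^[m] (some k) = some k

/-- The finset of periodic points. -/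
noncomputable def perF (π : Fin n → Option (Fin n)) : Finset (Fin n) :=
  @Finset.filter _ (isPer π) (Classical.decPred _) Finset.univ

lemma mem_perF {π : Fin n → Option (Fin n)} {k : Fin n} : k ∈ perF π ↔ isPer π k := by
  simp [perF, Finset.mem_filter]

def nextP (π : Fin n → Option (Fin n)) (k : Fin n) : Fin n := (π k).getD k

lemma iter_mul {π : Fin n → Option (Fin n)} {k : Fin n} {m : ℕ}
    (h : (stepO π)^[m] (some k) = some k) (c : ℕ) :
    (stepO π)^[c * m] (some k) = some k := by
  induction c with
  | zero => simp
  | succ c ih =>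
      rw [Nat.succ_mul, Function.iterate_add_apply, h, ih]

lemma isPer_pi_some {π : Fin n → Option (Fin n)} {k : Fin n} (hk : isPer π k) :
    π k = some (nextP π k) := by
  obtain ⟨m, hm, hiter⟩ := hk
  cases hp : π k with
  | none =>
      exfalso
      obtain ⟨m', rfl⟩ : ∃ m', m = m' + 1 := ⟨m - 1, by omega⟩
      rw [Function.iterate_succ_apply, stepO_some, hp,
        Function.iterate_fixed (stepO_none π)] at hiter
      exact absurd hiter (by simp)
  | some j => simp [nextP, hp]

lemma isPer_next {π : Fin n → Option (Fin n)} {k : Fin n} (hk : isPer π k) :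
    isPer π (nextP π k) := by
  obtain ⟨m, hm, hiter⟩ := id hk
  refine ⟨m, hm, ?_⟩
  have h1 : some (nextP π k) = stepO π (some k) := by
    rw [stepO_some, isPer_pi_some hk]
  rw [h1, ← Function.iterate_succ_apply, Function.iterate_succ_apply', hiter]

lemma isPer_next_inj {π : Fin n → Option (Fin n)} {k k' : Fin n}
    (hk : isPer π k) (hk' : isPer π k') (he : nextP π k = nextP π k') : k = k' := by
  obtain ⟨m, hm, hi⟩ := id hk
  obtain ⟨m', hm', hi'⟩ := id hk'
  have h1 : (stepO π)^[m * m'] (some k) = some k := by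
    have := iter_mul hi m'; rwa [Nat.mul_comm] at this
  have h2 : (stepO π)^[m * m'] (some k') = some k' := iter_mul hi' m
  have hmm : 1 ≤ m * m' := Nat.one_le_iff_ne_zero.mpr (by positivity)
  have hsucc : m * m' - 1 + 1 = m * m' := by omega
  have e1 : (stepO π)^[m * m' - 1] (some (nextP π k)) = some k := by
    rw [← hsucc, Function.iterate_succ_apply, stepO_some, isPer_pi_some hk] at h1
    exact h1
  have e2 : (stepO π)^[m * m' - 1] (some (nextP π k')) = some k' := by
    rw [← hsucc, Function.iterate_succ_apply, stepO_some, isPer_pi_some hk'] at h2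
    exact h2
  rw [he, e2] at e1
  exact Option.some_injective _ e1.symm

lemma perF_image (π : Fin n → Option (Fin n)) : (perF π).image (nextP π) = perF π := by
  apply Finset.eq_of_subset_of_card_le
  · intro j hj
    rw [Finset.mem_image] at hj
    obtain ⟨k, hk, rfl⟩ := hj
    exact mem_perF.mpr (isPer_next (mem_perF.mp hk))
  · rw [Finset.card_image_of_injOn]
    intro a ha b hb he
    exact isPer_next_inj (mem_perF.mp ha) (mem_perF.mp hb) he

lemma isPer_iterate_some {π : Fin n → Option (Fin n)} {k : Fin n} (hk : isPer π k) (a : ℕ) :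
    ∃ j, (stepO π)^[a] (some k) = some j ∧ isPer π j := by
  obtain ⟨m, hm, hi⟩ := id hk
  have hNa : a ≤ (a + 1) * m := by nlinarith
  have hN : (stepO π)^[(a + 1) * m] (some k) = some k := iter_mul hi (a + 1)
  have hsplit : (stepO π)^[(a + 1) * m - a] ((stepO π)^[a] (some k)) = some k := by
    rw [← Function.iterate_add_apply]
    rw [show (a + 1) * m - a + a = (a + 1) * m by omega]
    exact hN
  cases ho : (stepO π)^[a] (some k) with
  | none =>
      rw [ho, Function.iterate_fixed (stepO_none π)] at hsplit
      exact absurd hsplit (by simp)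
  | some j =>
      refine ⟨j, rfl, m, hm, ?_⟩
      have : (stepO π)^[m] ((stepO π)^[a] (some k)) = (stepO π)^[a] (some k) := by
        rw [← Function.iterate_add_apply, Nat.add_comm, Function.iterate_add_apply, hi]
      rw [ho] at this
      exact this

lemma perF_mono {π π' : Fin n → Option (Fin n)} (hagree : ∀ j, isPer π j → π' j = π j) :
    perF π ⊆ perF π' := by
  intro k hk
  rw [mem_perF] at *
  obtain ⟨m, hm, hi⟩ := id hk
  have key : ∀ a, (stepO π')^[a] (some k) = (stepO π)^[a] (some k) := by
    intro a
    induction a with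
    | zero => rfl
    | succ a ih =>
        obtain ⟨j, hj, hjper⟩ := isPer_iterate_some hk a
        rw [Function.iterate_succ_apply', Function.iterate_succ_apply', ih, hj, stepO_some,
          stepO_some, hagree j hjper]
  exact ⟨m, hm, by rw [key, hi]⟩

/-- the "until dead or periodic" condition. -/
def depthCond (π : Fin n → Option (Fin n)) (k : Fin n) (m : ℕ) : Prop :=
  (stepO π)^[m] (some k) = none ∨ ∃ j, isPer π j ∧ (stepO π)^[m] (some k) = some j

lemma depthCond_exists (π : Fin n → Option (Fin n)) (k : Fin n) : ∃ m, depthCond π k m := by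
  by_contra hc
  push_neg at hc
  have hc' : ∀ m, (stepO π)^[m] (some k) ≠ none ∧
      ∀ j, isPer π j → (stepO π)^[m] (some k) ≠ some j := by
    intro m
    have := hc m
    unfold depthCond at this
    push_neg at this
    exact ⟨this.1, fun j hj => (this.2 j hj)⟩
  have hsome : ∀ m : ℕ, ∃ j, (stepO π)^[m] (some k) = some j := by
    intro m
    cases ho : (stepO π)^[m] (some k) with
    | none => exact absurd ho (hc' m).1
    | some j => exact ⟨j, rfl⟩
  choose u hu using hsome
  obtain ⟨m₁, m₂, hne, he⟩ :=
    Fintype.exists_ne_map_eq_of_card_lt (fun m : Fin (n + 1) => u m.val) (by simp)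
  obtain ⟨a, b, hab, heq⟩ : ∃ a b : ℕ, a < b ∧ u a = u b := by
    rcases Nat.lt_or_ge m₁.val m₂.val with hlt | hge
    · exact ⟨m₁.val, m₂.val, hlt, he⟩
    · have : m₂.val < m₁.val := by
        rcases Nat.lt_or_ge m₂.val m₁.val with h' | h'
        · exact h'
        · exact absurd (Fin.ext (le_antisymm h' hge)) hne
      exact ⟨m₂.val, m₁.val, this, he.symm⟩
  have hper : isPer π (u a) := by
    refine ⟨b - a, by omega, ?_⟩
    have h1 : (stepO π)^[b - a] ((stepO π)^[a] (some k)) = (stepO π)^[b] (some k) := by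
      rw [← Function.iterate_add_apply]
      congr 1
      omega
    rw [hu a] at h1
    rw [h1, hu b, heq]
  exact (hc' a).2 (u a) hper (hu a)

noncomputable def depth (π : Fin n → Option (Fin n)) (k : Fin n) : ℕ :=
  @Nat.find _ (Classical.decPred _) (depthCond_exists π k)

lemma depth_spec (π : Fin n → Option (Fin n)) (k : Fin n) : depthCond π k (depth π k) :=
  @Nat.find_spec _ (Classical.decPred _) (depthCond_exists π k)

lemma depth_le {π : Fin n → Option (Fin n)} {k : Fin n} {m : ℕ} (hm : depthCond π k m) :
    depth π k ≤ m :=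
  @Nat.find_min' _ (Classical.decPred _) (depthCond_exists π k) m hm

lemma depth_min {π : Fin n → Option (Fin n)} {k : Fin n} {m : ℕ} (hm : m < depth π k) :
    ¬ depthCond π k m :=
  @Nat.find_min _ (Classical.decPred _) (depthCond_exists π k) m hm

lemma depthCond_zero_iff {π : Fin n → Option (Fin n)} {k : Fin n} :
    depthCond π k 0 ↔ isPer π k := by
  unfold depthCond
  simp only [Function.iterate_zero, id_eq]
  constructor
  · rintro (h | ⟨j, hj, hkj⟩)
    · exact absurd h (by simp)
    · rwa [← Option.some_injective _ hkj] at hj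
  · intro h
    exact Or.inr ⟨k, h, rfl⟩

lemma depth_zero {π : Fin n → Option (Fin n)} {k : Fin n} (hk : isPer π k) : depth π k = 0 :=
  Nat.le_zero.mp (depth_le (depthCond_zero_iff.mpr hk))

lemma depth_none {π : Fin n → Option (Fin n)} {k : Fin n} (hk : ¬ isPer π k)
    (hp : π k = none) : depth π k = 1 := by
  have h1 : depthCond π k 1 := by
    left
    rw [Function.iterate_one, stepO_some, hp]
  have h0 : ¬ depthCond π k 0 := fun hc => hk (depthCond_zero_iff.mp hc)
  have := depth_le h1
  interval_cases hd : depth π k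
  · exact absurd (hd ▸ depth_spec π k) h0
  · rfl

lemma depth_some {π : Fin n → Option (Fin n)} {k j : Fin n} (hk : ¬ isPer π k)
    (hp : π k = some j) : depth π k = depth π j + 1 := by
  have hshift : ∀ m, depthCond π k (m + 1) ↔ depthCond π j m := by
    intro m
    unfold depthCond
    rw [Function.iterate_succ_apply, stepO_some, hp]
  apply le_antisymm
  · exact depth_le ((hshift _).mpr (depth_spec π j))
  · by_contra hc
    push_neg at hc
    rcases Nat.eq_zero_or_pos (depth π k) with h0 | hpos
    · exact hk (depthCond_zero_iff.mp (h0 ▸ depth_spec π k))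
    · obtain ⟨m, hm⟩ : ∃ m, depth π k = m + 1 := ⟨depth π k - 1, by omega⟩
      have := (hshift m).mp (hm ▸ depth_spec π k)
      have := depth_le this
      omega


/-! ### the incidence partial map of a configuration -/

variable {E : Type*}

open Classical in
noncomputable def piMap (x y : Fin n → E) : Fin n → Option (Fin n) := fun k =>
  if h : ∃ j, x j = y k then some h.choose else none

lemma piMap_eq_some {x y : Fin n → E} {k j : Fin n} (h : piMap x y k = some j) :
    x j = y k := by
  classical
  unfold piMap at h
  split at h
  · rename_i h'
    rw [← Option.some_injective _ h]
    exact h'.choose_spec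
  · exact absurd h (by simp)

lemma piMap_eq_none {x y : Fin n → E} {k : Fin n} (h : piMap x y k = none) :
    ∀ j, x j ≠ y k := by
  classical
  unfold piMap at h
  split at h
  · exact absurd h (by simp)
  · rename_i h'
    push_neg at h'
    exact h'

lemma piMap_some_of {x : Fin n → E} (hx : Function.Injective x) {y : Fin n → E} {k j : Fin n}
    (hj : x j = y k) : piMap x y k = some j := by
  classical
  unfold piMap
  rw [dif_pos ⟨j, hj⟩]
  exact congrArg _ (hx ((Exists.intro j hj : ∃ j, x j = y k).choose_spec.trans hj.symm))

lemma piMap_comp {x : Fin n → E} (hx : Function.Injective x) (τ : Fin n → Fin n) :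
    piMap x (x ∘ τ) = fun k => some (τ k) :=
  funext fun k => piMap_some_of hx rfl

/-! ### the exact value of the adversarial objective -/

lemma phi_eq {Θ : Type*} (hn : 0 < n) (x y : Fin n → E) (hx : Function.Injective x)
    (f : Θ × E → ℝ) (h : ℝ → ℝ) (hconc : ConcaveOn ℝ Set.univ h)
    (hsup : IsLUB (Set.range h) 0)
    (hrep : ∀ g : E → ℝ, ∃ θ : Θ, (∀ k, f (θ, x k) = g (x k)) ∧ (∀ k, f (θ, y k) = g (y k))) :
    sSup {s : ℝ | ∃ θ : Θ, s = (1 / (n : ℝ)) * ∑ i, h (f (θ, x i) - f (θ, y i))}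
      = ((perF (piMap x y)).card : ℝ) * h 0 / n := by
  classical
  set π := piMap x y with hπ
  set C := perF π with hC
  set c := C.card with hc
  have hcn : c ≤ n := by
    have := Finset.card_le_univ C
    simpa using this
  have hnR : (0 : ℝ) < n := by exact_mod_cast hn
  have hhle : ∀ t, h t ≤ 0 := fun t => hsup.1 (Set.mem_range_self t)
  set S := {s : ℝ | ∃ θ : Θ, s = (1 / (n : ℝ)) * ∑ i, h (f (θ, x i) - f (θ, y i))} with hS
  -- upper bound for every element
  have hub : ∀ s ∈ S, s ≤ (c : ℝ) * h 0 / n := by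
    rintro s ⟨θ, rfl⟩
    set a : Fin n → ℝ := fun i => f (θ, x i) - f (θ, y i) with ha
    have hsumC : ∑ k ∈ C, a k = 0 := by
      have h1 : ∀ k ∈ C, y k = x (nextP π k) := fun k hk =>
        (piMap_eq_some (isPer_pi_some (mem_perF.mp hk))).symm
      have h2 : ∑ k ∈ C, a k = ∑ k ∈ C, f (θ, x k) - ∑ k ∈ C, f (θ, x (nextP π k)) := by
        rw [← Finset.sum_sub_distrib]
        refine Finset.sum_congr rfl fun k hk => ?_
        show f (θ, x k) - f (θ, y k) = _
        rw [h1 k hk]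
      have h3 : ∑ k ∈ C, f (θ, x (nextP π k)) = ∑ j ∈ C.image (nextP π), f (θ, x j) := by
        rw [Finset.sum_image]
        intro a ha b hb he
        exact isPer_next_inj (mem_perF.mp ha) (mem_perF.mp hb) he
      rw [h2, h3, perF_image, sub_self]
    have hCle : ∑ k ∈ C, h (a k) ≤ (c : ℝ) * h 0 := by
      rcases Nat.eq_zero_or_pos c with h0 | hpos
      · have : C = ∅ := Finset.card_eq_zero.mp h0
        simp [this, h0]
      · have hcR : (0 : ℝ) < c := by exact_mod_cast hpos
        have jensen := hconc.le_map_sum (t := C) (w := fun _ => (c : ℝ)⁻¹) (p := a)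
          (fun i _ => by positivity)
          (by
            rw [Finset.sum_const, nsmul_eq_mul, ← hc]
            field_simp)
          (fun i _ => Set.mem_univ _)
        have hrhs : ∑ k ∈ C, (c : ℝ)⁻¹ • a k = 0 := by
          rw [← Finset.smul_sum, hsumC, smul_zero]
        rw [hrhs] at jensen
        have : (c : ℝ)⁻¹ * ∑ k ∈ C, h (a k) ≤ h 0 := by
          rw [Finset.mul_sum]
          simpa [smul_eq_mul] using jensen
        have := mul_le_mul_of_nonneg_left this (le_of_lt hcR)
        rwa [← mul_assoc, mul_inv_cancel₀ (ne_of_gt hcR), one_mul] at this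
    have hcompl : ∑ k ∈ Cᶜ, h (a k) ≤ 0 :=
      Finset.sum_nonpos fun k _ => hhle _
    have htot : ∑ i, h (a i) ≤ (c : ℝ) * h 0 := by
      rw [← Finset.sum_add_sum_compl C]
      linarith
    calc (1 / (n : ℝ)) * ∑ i, h (a i) ≤ (1 / (n : ℝ)) * ((c : ℝ) * h 0) :=
          mul_le_mul_of_nonneg_left htot (by positivity)
      _ = (c : ℝ) * h 0 / n := by ring
  -- membership of the sliding values
  have hmem : ∀ T : ℝ, (1 / (n : ℝ)) * ((c : ℝ) * h 0 + ((n : ℝ) - c) * h T) ∈ S := by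
    intro T
    obtain ⟨θ, hθx, hθy⟩ := hrep (fun p => if hp : ∃ k, x k = p then T * depth π hp.choose else 0)
    have hgx : ∀ k, f (θ, x k) = T * depth π k := by
      intro k
      rw [hθx k, dif_pos ⟨k, rfl⟩]
      congr 2
      exact congrArg (depth π) (hx (Exists.choose_spec (⟨k, rfl⟩ : ∃ j, x j = x k)))
    have ha : ∀ k, f (θ, x k) - f (θ, y k) = if isPer π k then 0 else T := by
      intro k
      cases hpk : π k with
      | some j =>
          have hyk : y k = x j := (piMap_eq_some hpk).symm
          have hfy : f (θ, y k) = T * depth π j := by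
            rw [hθy k, hyk, dif_pos ⟨j, rfl⟩]
            congr 2
            exact congrArg (depth π) (hx (Exists.choose_spec (⟨j, rfl⟩ : ∃ j', x j' = x j)))
          by_cases hper : isPer π k
          · have hj : j = nextP π k := by
              have := isPer_pi_some hper
              rw [hpk] at this
              exact Option.some_injective _ this
            have : isPer π j := hj ▸ isPer_next hper
            rw [hgx, hfy, depth_zero hper, depth_zero this, if_pos hper]
            ring
          · rw [hgx, hfy, depth_some hper hpk, if_neg hper]
            push_cast
            ring
      | none =>
          have hper : ¬ isPer π k := by
            intro hper
            rw [isPer_pi_some hper] at hpk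
            exact absurd hpk (by simp)
          have hfy : f (θ, y k) = 0 := by
            rw [hθy k, dif_neg]
            push_neg
            exact piMap_eq_none hpk
          rw [hgx, hfy, depth_none hper hpk, if_neg hper]
          push_cast
          ring
    refine ⟨θ, ?_⟩
    congr 1
    have : ∑ i, h (f (θ, x i) - f (θ, y i)) = ∑ i ∈ C, h 0 + ∑ i ∈ Cᶜ, h T := by
      rw [← Finset.sum_add_sum_compl C]
      congr 1
      · exact Finset.sum_congr rfl fun k hk => by rw [ha k, if_pos (mem_perF.mp hk)]
      · refine Finset.sum_congr rfl fun k hk => ?_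
        rw [ha k, if_neg]
        intro hper
        exact (Finset.mem_compl.mp hk) (mem_perF.mpr hper)
    rw [this, Finset.sum_const, Finset.sum_const, Finset.card_compl, nsmul_eq_mul, nsmul_eq_mul]
    have : ((Fintype.card (Fin n) - C.card : ℕ) : ℝ) = (n : ℝ) - c := by
      rw [Nat.cast_sub (by simpa using hcn)]
      simp
      exact hc.symm
    rw [this]
  have hbdd : BddAbove S := ⟨(c : ℝ) * h 0 / n, hub⟩
  have hne : S.Nonempty := ⟨_, hmem 0⟩
  apply le_antisymm (csSup_le hne hub)
  -- lower bound
  apply le_of_forall_sub_le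
  intro ε hε
  obtain ⟨v, hvmem, hv1, _⟩ := hsup.exists_between (show -ε < (0 : ℝ) by linarith)
  obtain ⟨t₀, rfl⟩ := hvmem
  have hkey : -(ε * n) ≤ ((n : ℝ) - c) * h t₀ := by
    have h1 : h t₀ ≤ 0 := hhle t₀
    have h2 : (c : ℝ) ≤ n := by exact_mod_cast hcn
    nlinarith
  have : (c : ℝ) * h 0 / n - ε ≤ (1 / (n : ℝ)) * ((c : ℝ) * h 0 + ((n : ℝ) - c) * h t₀) := by
    rw [div_sub' (ne_of_gt hnR), one_div, inv_mul_eq_div]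
    gcongr
    linarith
  exact this.trans (le_csSup hbdd (hmem t₀))


/-! ### paths along which the periodic set only grows -/

/-- monotonicity of the periodic set along a path of configurations. -/
def monoOn (x : Fin n → E) (Y : ℝ → Fin n → E) : Prop :=
  ∀ s ∈ Set.Icc (0:ℝ) 1, ∀ t ∈ Set.Icc (0:ℝ) 1, s ≤ t →
    perF (piMap x (Y s)) ⊆ perF (piMap x (Y t))

lemma glue [TopologicalSpace E] (x : Fin n → E) {A B : ℝ → Fin n → E}
    (hA : Continuous A) (hB : Continuous B) (hAB : A 1 = B 0)
    (hmA : monoOn x A) (hmB : monoOn x B) :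
    ∃ Y : ℝ → Fin n → E, Continuous Y ∧ Y 0 = A 0 ∧ Y 1 = B 1 ∧ monoOn x Y := by
  classical
  refine ⟨fun t => if t ≤ 1/2 then A (2*t) else B (2*t - 1), ?_, ?_, ?_, ?_⟩
  · apply Continuous.if_le (hA.comp (by fun_prop)) (hB.comp (by fun_prop))
      continuous_id continuous_const
    intro t ht
    have ht' : t = 1/2 := ht
    subst ht'
    show A (2 * (1/2 : ℝ)) = B (2 * (1/2 : ℝ) - 1)
    norm_num
    exact hAB
  · norm_num
  · norm_num
  · intro s hs t ht hst
    by_cases hs2 : s ≤ 1/2 <;> by_cases ht2 : t ≤ 1/2 <;>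
      simp only [hs2, ht2, if_pos, if_neg, if_true, if_false]
    · exact hmA (2*s) (by constructor <;> [linarith [hs.1]; linarith]) (2*t)
        (by constructor <;> [linarith [ht.1]; linarith]) (by linarith)
    · refine subset_trans (hmA (2*s) (by constructor <;> [linarith [hs.1]; linarith]) 1
        (by norm_num) (by linarith)) ?_
      rw [show A 1 = B 0 from hAB]
      exact hmB 0 (by norm_num) (2*t - 1)
        (by constructor <;> [linarith; linarith [ht.2]]) (by linarith)
    · exact absurd hst (by push_neg; linarith)
    · exact hmB (2*s - 1) (by constructor <;> [linarith; linarith [hs.2]]) (2*t - 1)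
        (by constructor <;> [linarith; linarith [ht.2]]) (by linarith)

variable [NormedAddCommGroup E] [NormedSpace ℝ E]

lemma phase0 (hn : 0 < n) (x : Fin n → E) (hx : Function.Injective x) (y0 : Fin n → E) :
    ∃ (Y : ℝ → Fin n → E) (τ : Fin n → Fin n),
      Continuous Y ∧ Y 0 = y0 ∧ Y 1 = x ∘ τ ∧ monoOn x Y := by
  classical
  haveI : Nonempty (Fin n) := ⟨⟨0, hn⟩⟩
  have hne : (Finset.univ : Finset (Fin n)).Nonempty := Finset.univ_nonempty
  have hnear : ∀ k : Fin n, ∃ j : Fin n, ∀ l : Fin n, dist (y0 k) (x j) ≤ dist (y0 k) (x l) := by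
    intro k
    obtain ⟨j, _, hj⟩ := Finset.exists_min_image Finset.univ (fun j => dist (y0 k) (x j)) hne
    exact ⟨j, fun l => hj l (Finset.mem_univ l)⟩
  choose near hnear using hnear
  set τ : Fin n → Fin n := fun k => if hk : ∃ j, x j = y0 k then hk.choose else near k with hτ
  set Y : ℝ → Fin n → E := fun t k => y0 k + t • (x (τ k) - y0 k) with hY
  have hfrozen : ∀ k (hk : ∃ j, x j = y0 k), x (τ k) = y0 k := by
    intro k hk
    rw [hτ]
    simp only [dif_pos hk]
    exact hk.choose_spec
  have hYfr : ∀ k (hk : ∃ j, x j = y0 k) (t : ℝ), Y t k = y0 k := by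
    intro k hk t
    rw [hY]
    simp [hfrozen k hk]
  refine ⟨Y, τ, ?_, ?_, ?_, ?_⟩
  · refine continuous_pi fun k => ?_
    exact continuous_const.add ((continuous_id.smul continuous_const))
  · funext k; simp [hY]
  · funext k; simp [hY]
  · -- monotonicity
    have hmover : ∀ k, (¬ ∃ j, x j = y0 k) → ∀ t, 0 ≤ t → t < 1 → ¬ ∃ l, x l = Y t k := by
      rintro k hk t ht0 ht1 ⟨l, hl⟩
      have hτk : τ k = near k := by rw [hτ]; simp only [dif_neg hk]
      have hD : 0 < ‖x (near k) - y0 k‖ := by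
        rw [norm_pos_iff, sub_ne_zero]
        intro he
        exact hk ⟨near k, he⟩
      have h1 : dist (y0 k) (x l) = t * ‖x (near k) - y0 k‖ := by
        rw [hl, dist_comm, dist_eq_norm, hY]
        simp only [hτk, add_sub_cancel_left]
        rw [norm_smul, Real.norm_eq_abs, abs_of_nonneg ht0]
      have h2 := hnear k l
      rw [h1] at h2
      have h3 : dist (y0 k) (x (near k)) = ‖x (near k) - y0 k‖ := by
        rw [dist_eq_norm, norm_sub_rev]
      rw [h3] at h2
      nlinarith
    have hpi : ∀ t, 0 ≤ t → t < 1 → piMap x (Y t) = piMap x y0 := by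
      intro t ht0 ht1
      funext k
      by_cases hk : ∃ j, x j = y0 k
      · unfold piMap
        rw [hYfr k hk t]
      · unfold piMap
        rw [dif_neg (hmover k hk t ht0 ht1), dif_neg hk]
    intro s hs t ht hst
    by_cases ht1 : t = 1
    · subst ht1
      by_cases hs1 : s = 1
      · subst hs1; exact subset_refl _
      · have hs1' : s < 1 := lt_of_le_of_ne hs.2 hs1
        rw [hpi s hs.1 hs1']
        apply perF_mono
        intro j hj
        have hfr : ∃ j', x j' = y0 j := by
          have := isPer_pi_some hj
          exact ⟨nextP (piMap x y0) j, piMap_eq_some this⟩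
        have h1 : piMap x y0 j = some ((⟨nextP (piMap x y0) j,
            piMap_eq_some (isPer_pi_some hj)⟩ : ∃ j', x j' = y0 j).choose) := by
          unfold piMap
          rw [dif_pos hfr]
        have hY1 : Y 1 j = x (τ j) := by rw [hY]; simp
        rw [show piMap x (Y 1) j = some (τ j) from by
          rw [hY]
          exact piMap_some_of hx (by simp)]
        rw [hτ]
        simp only [dif_pos hfr]
        unfold piMap
        rw [dif_pos hfr]
    · have ht1' : t < 1 := lt_of_le_of_ne ht.2 ht1
      rw [hpi s hs.1 (lt_of_le_of_lt hst ht1'), hpi t ht.1 ht1']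


lemma perF_univ_of_card {π : Fin n → Option (Fin n)} (hcard : n ≤ (perF π).card) :
    perF π = Finset.univ := by
  apply Finset.eq_univ_of_card
  have := Finset.card_le_univ (perF π)
  simp only [Finset.card_univ, Fintype.card_fin] at *
  omega

lemma lemB (x : Fin n → E) (hx : Function.Injective x) :
    ∀ m (τ : Fin n → Fin n), n ≤ (perF (fun k => some (τ k))).card + m →
    ∃ Y : ℝ → Fin n → E, Continuous Y ∧ Y 0 = x ∘ τ ∧ monoOn x Y ∧
      perF (piMap x (Y 1)) = Finset.univ := by
  classical
  intro m
  induction m with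
  | zero =>
      intro τ hcard
      refine ⟨fun _ => x ∘ τ, continuous_const, rfl, ?_, ?_⟩
      · intro s _ t _ _; exact subset_refl _
      · rw [piMap_comp hx]
        exact perF_univ_of_card (by simpa using hcard)
  | succ m ih =>
      intro τ hcard
      by_cases hall : n ≤ (perF (fun k => some (τ k))).card
      · refine ⟨fun _ => x ∘ τ, continuous_const, rfl, ?_, ?_⟩
        · intro s _ t _ _; exact subset_refl _
        · rw [piMap_comp hx]
          exact perF_univ_of_card hall
      · -- there is a non-periodic point; pick one of maximal depth
        set τh : Fin n → Option (Fin n) := fun k => some (τ k) with hτh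
        have hNP : (Finset.univ \ perF τh).Nonempty := by
          rw [Finset.sdiff_nonempty]
          intro hsub
          exact hall (by
            have := Finset.card_le_card hsub
            simpa using this)
        obtain ⟨i, hiNP, himax⟩ := Finset.exists_max_image (Finset.univ \ perF τh)
          (depth τh) hNP
        have hiper : ¬ isPer τh i := by
          have := Finset.mem_sdiff.mp hiNP
          rw [← mem_perF]
          exact this.2
        have hpre : ∀ a, a ≠ i → τ a ≠ i := by
          intro a ha hta
          by_cases hap : isPer τh a
          · apply hiper
            have h1 : nextP τh a = τ a := rfl
            have := isPer_next hap
            rw [h1, hta] at this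
            exact this
          · have h1 : depth τh a = depth τh i + 1 := by
              have : τh a = some i := by rw [hτh]; simp [hta]
              exact depth_some hap this
            have h2 := himax a (Finset.mem_sdiff.mpr ⟨Finset.mem_univ a, by
              rw [mem_perF.not]  -- a ∉ perF
              exact hap⟩)
            omega
        have hti : τ i ≠ i := by
          intro he
          exact hiper ⟨1, one_pos, by simp [stepO, τh, he]⟩
        -- the moving phase
        set A : ℝ → Fin n → E :=
          fun t => Function.update (x ∘ τ) i (x (τ i) + t • (x i - x (τ i))) with hA
        set τ' : Fin n → Fin n := Function.update τ i i with hτ'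
        have hA0 : A 0 = x ∘ τ := by
          rw [hA]
          funext k
          by_cases hk : k = i
          · subst hk; simp
          · simp [Function.update_of_ne hk]
        have hA1 : A 1 = x ∘ τ' := by
          rw [hA, hτ']
          funext k
          by_cases hk : k = i
          · subst hk; simp
          · simp [Function.update_of_ne hk]
        have hAc : Continuous A := by
          refine continuous_pi fun k => ?_
          by_cases hk : k = i
          · subst hk
            simp only [hA, Function.update_self]
            exact continuous_const.add (continuous_id.smul continuous_const)
          · simp only [hA, Function.update_of_ne hk]
            exact continuous_const
        have hπt : ∀ (t : ℝ) k, k ≠ i → piMap x (A t) k = some (τ k) := by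
          intro t k hk
          apply piMap_some_of hx
          rw [hA]
          simp [Function.update_of_ne hk]
        have claim1 : ∀ t : ℝ, perF τh ⊆ perF (piMap x (A t)) := by
          intro t
          apply perF_mono
          intro j hj
          have hji : j ≠ i := fun he => hiper (he ▸ hj)
          rw [hπt t j hji]
        have hinoper : ∀ t : ℝ, t ≠ 1 → ¬ isPer (piMap x (A t)) i := by
          intro t ht1 hj
          obtain ⟨m', hm', hiter⟩ := hj
          obtain ⟨m'', rfl⟩ : ∃ m'', m' = m'' + 1 := ⟨m' - 1, by omega⟩
          rw [Function.iterate_succ_apply'] at hiter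
          cases ho : (stepO (piMap x (A t)))^[m''] (some i) with
          | none => rw [ho] at hiter; exact absurd hiter (by rw [stepO_none]; simp)
          | some a =>
              rw [ho, stepO_some] at hiter
              by_cases ha : a = i
              · subst ha
                have hxa : x a = A t a := piMap_eq_some hiter
                rw [hA] at hxa
                simp only [Function.update_self] at hxa
                have hz : (1 - t) • (x a - x (τ a)) = 0 := by
                  linear_combination (norm := module) hxa
                rcases smul_eq_zero.mp hz with h' | h'
                · exact ht1 (by linarith [sub_eq_zero.mp h'])
                · exact hti (hx (sub_eq_zero.mp h')).symm
              · rw [hπt t a ha] at hiter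
                exact hpre a ha (Option.some_injective _ hiter)
        have claim2 : ∀ t : ℝ, t ≠ 1 → perF (piMap x (A t)) ⊆ perF τh := by
          intro t ht1
          apply perF_mono
          intro j hj
          by_cases hji : j = i
          · exact absurd (hji ▸ hj) (hinoper t ht1)
          · rw [hτh, hπt t j hji]
      -- end claim2
        have hiτ' : isPer (fun k => some (τ' k)) i :=
          ⟨1, one_pos, by simp [stepO, hτ']⟩
        have claim3 : insert i (perF τh) ⊆ perF (fun k => some (τ' k)) := by
          intro j hj
          rcases Finset.mem_insert.mp hj with rfl | hj
          · exact mem_perF.mpr hiτ'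
          · refine perF_mono ?_ hj
            intro a ha
            have hai : a ≠ i := fun he => hiper (he ▸ ha)
            rw [hτ']
            simp [Function.update_of_ne hai, hτh]
        have hcard' : n ≤ (perF (fun k => some (τ' k))).card + m := by
          have h1 : (insert i (perF τh)).card = (perF τh).card + 1 :=
            Finset.card_insert_of_notMem (fun hmem => hiper (mem_perF.mp hmem))
          have h2 := Finset.card_le_card claim3
          omega
        obtain ⟨B, hBc, hB0, hBmono, hB1⟩ := ih τ' hcard'
        have hAB : A 1 = B 0 := by rw [hA1, hB0]
        have hAmono : monoOn x A := by
          intro s hs t ht hst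
          by_cases ht1 : t = 1
          · subst ht1
            have h1 : perF (piMap x (A 1)) = perF (fun k => some (τ' k)) := by
              rw [hA1, piMap_comp hx]
            by_cases hs1 : s = 1
            · subst hs1; exact subset_refl _
            · rw [h1]
              exact subset_trans (claim2 s hs1)
                (subset_trans (Finset.subset_insert i _) claim3)
          · have hs1 : s ≠ 1 := fun he => ht1 (le_antisymm ht.2 (he ▸ hst))
            exact subset_trans (claim2 s hs1) (claim1 t)
        obtain ⟨Y, hYc, hY0, hY1, hYmono⟩ := glue x hAc hBc hAB hAmono hBmono
        exact ⟨Y, hYc, by rw [hY0, hA0], hYmono, by rw [hY1]; exact hB1⟩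

lemma path_exists (hn : 0 < n) (x : Fin n → E) (hx : Function.Injective x)
    (y0 : Fin n → E) :
    ∃ Y : ℝ → Fin n → E, Continuous Y ∧ Y 0 = y0 ∧ monoOn x Y ∧
      perF (piMap x (Y 1)) = Finset.univ := by
  obtain ⟨A, τ, hAc, hA0, hA1, hAmono⟩ := phase0 hn x hx y0
  obtain ⟨B, hBc, hB0, hBmono, hB1⟩ := lemB x hx n τ (Nat.le_add_left n _)
  obtain ⟨Y, hYc, hY0, hY1, hYmono⟩ := glue x hAc hBc (by rw [hA1, hB0]) hAmono hBmono
  exact ⟨Y, hYc, by rw [hY0, hA0], hYmono, by rw [hY1]; exact hB1⟩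


/-! ### representation of arbitrary functions on the sample points -/

lemma rep_of_hD {E' Θ : Type*} [Infinite E'] {N : ℕ} (f : Θ × E' → ℝ)
    (hD : ∀ v : Fin (2 * N) → E', Function.Injective v →
      ∀ b : Fin (2 * N) → ℝ, ∃ θ : Θ, ∀ i, f (θ, v i) = b i)
    (x y : Fin N → E') (g : E' → ℝ) :
    ∃ θ : Θ, (∀ k, f (θ, x k) = g (x k)) ∧ (∀ k, f (θ, y k) = g (y k)) := by
  classical
  set s : Finset E' := Finset.image x Finset.univ ∪ Finset.image y Finset.univ with hs
  have hcard : s.card ≤ 2 * N := by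
    calc s.card ≤ (Finset.image x Finset.univ).card + (Finset.image y Finset.univ).card :=
          Finset.card_union_le _ _
      _ ≤ N + N := add_le_add
          ((Finset.card_image_le).trans (by simp)) ((Finset.card_image_le).trans (by simp))
      _ = 2 * N := (two_mul N).symm
  obtain ⟨t, hst, htcard⟩ := Infinite.exists_superset_card_eq s (2 * N) hcard
  have htc : Fintype.card {p // p ∈ t} = 2 * N := by rw [Fintype.card_coe, htcard]
  set e : {p // p ∈ t} ≃ Fin (2 * N) := Fintype.equivFinOfCardEq htc with he
  set v : Fin (2 * N) → E' := fun i => (e.symm i : E') with hv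
  have hvinj : Function.Injective v :=
    fun i j hij => e.symm.injective (Subtype.coe_injective hij)
  obtain ⟨θ, hθ⟩ := hD v hvinj (fun i => g (v i))
  have hval : ∀ p ∈ t, f (θ, p) = g p := by
    intro p hp
    have h1 : v (e ⟨p, hp⟩) = p := by rw [hv]; simp
    have := hθ (e ⟨p, hp⟩)
    rwa [h1] at this
  constructor
  constructor
  · intro k
    exact hval (x k) (hst (Finset.mem_union_left _
      (Finset.mem_image.mpr ⟨k, Finset.mem_univ k, rfl⟩)))
  · intro k
    exact hval (y k) (hst (Finset.mem_union_right _
      (Finset.mem_image.mpr ⟨k, Finset.mem_univ k, rfl⟩)))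

end Stmt16

/-- A point `w` is global-min-reachable for `F` if there is a continuous path starting
at `w`, along which `F` is non-increasing, ending at a global minimizer of `F`. -/
def GlobalMinReachable {E : Type*} [TopologicalSpace E] (F : E → ℝ) (w : E) : Prop :=
  ∃ γ : ℝ → E, ContinuousOn γ (Set.Icc 0 1) ∧ γ 0 = w ∧
    (∀ s ∈ Set.Icc (0 : ℝ) 1, ∀ t ∈ Set.Icc (0 : ℝ) 1, s ≤ t → F (γ t) ≤ F (γ s)) ∧
    (∀ w', F (γ 1) ≤ F w')

theorem stmt16 {d n dz K J : ℕ} (hd : 1 ≤ d) (hn : 1 ≤ n)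
    (x : Fin n → EuclideanSpace ℝ (Fin d)) (hx : Function.Injective x)
    (z : Fin n → EuclideanSpace ℝ (Fin dz)) (hz : Function.Injective z)
    (G : EuclideanSpace ℝ (Fin K) × EuclideanSpace ℝ (Fin dz) → EuclideanSpace ℝ (Fin d))
    (hG : Continuous G)
    (f : EuclideanSpace ℝ (Fin J) × EuclideanSpace ℝ (Fin d) → ℝ)
    (W : Set (EuclideanSpace ℝ (Fin K)))
    -- (D-representation)
    (hD : ∀ v : Fin (2 * n) → EuclideanSpace ℝ (Fin d), Function.Injective v →
      ∀ b : Fin (2 * n) → ℝ, ∃ θ : EuclideanSpace ℝ (Fin J), ∀ i, f (θ, v i) = b i)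
    -- (G-representation)
    (hGrep : ∀ Y : Fin n → EuclideanSpace ℝ (Fin d), ∃ w ∈ W, ∀ i, G (w, z i) = Y i)
    -- (path-keeping)
    (hpath : ∀ Ypath : ℝ → (Fin n → EuclideanSpace ℝ (Fin d)),
      ContinuousOn Ypath (Set.Icc 0 1) →
      ∀ w0 ∈ W, (∀ i, G (w0, z i) = Ypath 0 i) →
      ∃ wpath : ℝ → EuclideanSpace ℝ (Fin K),
        ContinuousOn wpath (Set.Icc 0 1) ∧ wpath 0 = w0 ∧
        ∀ t ∈ Set.Icc (0 : ℝ) 1, ∀ i, G (wpath t, z i) = Ypath t i)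
    (h : ℝ → ℝ) (hconc : ConcaveOn ℝ Set.univ h)
    (hsup : IsLUB (Set.range h) 0) (h0 : h 0 < 0) :
    ∀ w ∈ W, GlobalMinReachable
      (fun w' => sSup {s : ℝ | ∃ θ : EuclideanSpace ℝ (Fin J),
        s = (1 / (n : ℝ)) * ∑ i, h (f (θ, x i) - f (θ, G (w', z i)))}) w := by
  classical
  intro w hw
  have hn' : 0 < n := hn
  haveI : Infinite (EuclideanSpace ℝ (Fin d)) := by
    apply Infinite.of_injective (fun r : ℝ => EuclideanSpace.single (⟨0, hd⟩ : Fin d) r)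
    intro a b hab
    have := congrArg (fun v => v ⟨0, hd⟩) hab
    simpa [EuclideanSpace.single_apply] using this
  have hnR : (0 : ℝ) < n := by exact_mod_cast hn'
  -- the path of configurations
  obtain ⟨Y, hYc, hY0, hYmono, hY1⟩ :=
    Stmt16.path_exists hn' x hx (fun i => G (w, z i))
  obtain ⟨γ, hγc, hγ0, hγG⟩ :=
    hpath Y hYc.continuousOn w hw (fun i => (congrFun hY0 i).symm)
  have hrep : ∀ yy : Fin n → EuclideanSpace ℝ (Fin d), ∀ g : EuclideanSpace ℝ (Fin d) → ℝ,
      ∃ θ : EuclideanSpace ℝ (Fin J),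
        (∀ k, f (θ, x k) = g (x k)) ∧ (∀ k, f (θ, yy k) = g (yy k)) :=
    fun yy g => Stmt16.rep_of_hD f hD x yy g
  have hval : ∀ t ∈ Set.Icc (0:ℝ) 1,
      sSup {s : ℝ | ∃ θ : EuclideanSpace ℝ (Fin J),
        s = (1 / (n : ℝ)) * ∑ i, h (f (θ, x i) - f (θ, G (γ t, z i)))}
      = ((Stmt16.perF (Stmt16.piMap x (Y t))).card : ℝ) * h 0 / n := by
    intro t ht
    have hGY : ∀ i, G (γ t, z i) = Y t i := hγG t ht
    simp only [hGY]
    exact Stmt16.phi_eq hn' x (Y t) hx f h hconc hsup (hrep (Y t))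
  refine ⟨γ, hγc, hγ0, ?_, ?_⟩
  · -- monotonicity along the path
    intro s hs t ht hst
    simp only []
    rw [hval s hs, hval t ht]
    have hsub := hYmono s hs t ht hst
    have hcardle : ((Stmt16.perF (Stmt16.piMap x (Y s))).card : ℝ)
        ≤ ((Stmt16.perF (Stmt16.piMap x (Y t))).card : ℝ) := by
      exact_mod_cast Finset.card_le_card hsub
    have : ((Stmt16.perF (Stmt16.piMap x (Y t))).card : ℝ) * h 0
        ≤ ((Stmt16.perF (Stmt16.piMap x (Y s))).card : ℝ) * h 0 :=
      mul_le_mul_of_nonpos_right hcardle (le_of_lt h0)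
    gcongr
  · -- global minimality
    intro w'
    simp only []
    rw [hval 1 (by norm_num)]
    rw [hY1]
    have hend : ((Finset.univ : Finset (Fin n)).card : ℝ) * h 0 / n = h 0 := by
      rw [Finset.card_univ, Fintype.card_fin]
      field_simp
    rw [hend]
    -- h 0 is always a member of the value set
    obtain ⟨θ, hθx, hθy⟩ := hrep (fun i => G (w', z i)) (fun _ => 0)
    have hbdd : BddAbove {s : ℝ | ∃ θ : EuclideanSpace ℝ (Fin J),
        s = (1 / (n : ℝ)) * ∑ i, h (f (θ, x i) - f (θ, G (w', z i)))} := by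
      refine ⟨0, ?_⟩
      rintro s ⟨θ', rfl⟩
      have hsum : ∑ i, h (f (θ', x i) - f (θ', G (w', z i))) ≤ 0 :=
        Finset.sum_nonpos fun i _ => hsup.1 (Set.mem_range_self _)
      exact mul_nonpos_of_nonneg_of_nonpos (by positivity) hsum
    apply le_csSup hbdd
    refine ⟨θ, ?_⟩
    have : ∀ i : Fin n, h (f (θ, x i) - f (θ, G (w', z i))) = h 0 := by
      intro i
      rw [hθx i, hθy i, sub_zero]
    rw [Finset.sum_congr rfl fun i _ => this i, Finset.sum_const, Finset.card_univ,
      Fintype.card_fin, nsmul_eq_mul]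
    field_simp
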